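/- Let χ : ℝ → ℝ be nondecreasing, convex, and bounded on (-∞, 0], with χ(0) = 0 and left derivative χ'(0) = 1, and let g(s) = χ''(-s) be the associated Lebesgue–Stieltjes measure on [0,∞). Then for every t ≤ 0, χ(t) = ∫₀^∞ max(t, -s) g(s) ds. -/

import Mathlib

open Filter MeasureTheory Set Topology

section aux

variable {χ : ℝ → ℝ}

/-- Existence of the left derivative of a convex function at points `x < 0`. -/
lemma leftDeriv_exists (hconv : ConvexOn ℝ (Set.Iic (0 : ℝ)) χ) {x : ℝ} (hx : x < 0) :
    HasDerivWithinAt χ (derivWithin χ (Set.Iio x) x) (Set.Iio x) x := by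
  have hxS : x ∈ Set.Iic (0 : ℝ) := le_of_lt hx
  have hmono' : MonotoneOn (slope χ x) (Iio x) := by
    refine (hconv.slope_mono hxS).mono ?_
    intro y hy
    exact ⟨le_of_lt ((mem_Iio.1 hy).trans hx), ne_of_lt (mem_Iio.1 hy)⟩
  have hbdd : BddAbove (slope χ x '' Iio x) := by
    refine ⟨slope χ x 0, ?_⟩
    rintro _ ⟨y, hy, rfl⟩
    exact (hconv.slope_mono hxS) ⟨le_of_lt ((mem_Iio.1 hy).trans hx), ne_of_lt hy⟩
      ⟨mem_Iic.2 le_rfl, ne_of_gt hx⟩ (le_of_lt ((mem_Iio.1 hy).trans hx))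
  have htend := hmono'.tendsto_nhdsLT hbdd
  have H : HasDerivWithinAt χ (sSup (slope χ x '' Iio x)) (Iio x) x :=
    (hasDerivWithinAt_iff_tendsto_slope' (notMem_Iio.2 le_rfl)).2 htend
  rwa [H.derivWithin (uniqueDiffWithinAt_Iio x)]

/-- Existence of the right derivative of a convex function at points `x < 0`. -/
lemma rightDeriv_exists (hconv : ConvexOn ℝ (Set.Iic (0 : ℝ)) χ) {x : ℝ} (hx : x < 0) :
    HasDerivWithinAt χ (derivWithin χ (Set.Ioi x) x) (Set.Ioi x) x := by
  have hxS : x ∈ Set.Iic (0 : ℝ) := le_of_lt hx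
  have hne : (Ioo x (0 : ℝ)).Nonempty := ⟨x / 2, by constructor <;> [linarith; linarith]⟩
  have hmono' : MonotoneOn (slope χ x) (Ioo x 0) := by
    refine (hconv.slope_mono hxS).mono ?_
    intro y hy
    exact ⟨le_of_lt hy.2, ne_of_gt hy.1⟩
  have hbdd : BddBelow (slope χ x '' Ioo x 0) := by
    refine ⟨slope χ x (x - 1), ?_⟩
    rintro _ ⟨y, hy, rfl⟩
    exact (hconv.slope_mono hxS) ⟨mem_Iic.2 (by linarith), fun h => by simp only [mem_singleton_iff] at h; linarith⟩
      ⟨le_of_lt hy.2, ne_of_gt hy.1⟩ (by linarith [hy.1])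
  have htend : Tendsto (slope χ x) (𝓝[>] x) (𝓝 (sInf (slope χ x '' Ioo x 0))) :=
    MonotoneOn.tendsto_nhdsWithin_Ioo_right hne hmono' hbdd
  have H : HasDerivWithinAt χ (sInf (slope χ x '' Ioo x 0)) (Ioi x) x :=
    (hasDerivWithinAt_iff_tendsto_slope' (notMem_Ioi.2 le_rfl)).2 htend
  rwa [H.derivWithin (uniqueDiffWithinAt_Ioi x)]

end aux

/-- With `χ` nondecreasing, convex, bounded on `(-∞,0]`, `χ 0 = 0`,
left derivative `χ'(0) = 1`, and `g(s) ds = χ''(-s) ds` the Lebesgue–Stieltjes measure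
on `[0,∞)` (given by the Stieltjes function `f s = -χ'(-s)` for `s ≥ 0`, extended
constantly below `0`), we have `χ t = ∫₀^∞ max (t, -s) g(s) ds` for all `t ≤ 0`. -/
theorem stmt1 (χ : ℝ → ℝ)
    (hconv : ConvexOn ℝ (Set.Iic (0 : ℝ)) χ)
    (hmono : MonotoneOn χ (Set.Iic (0 : ℝ)))
    (hbddB : BddBelow (χ '' Set.Iic (0 : ℝ)))
    (hbddA : BddAbove (χ '' Set.Iic (0 : ℝ)))
    (h0 : χ 0 = 0)
    (h1 : derivWithin χ (Set.Iio (0 : ℝ)) 0 = 1)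
    (f : StieltjesFunction ℝ)
    (hf : ∀ s : ℝ, 0 ≤ s → f s = - derivWithin χ (Set.Iio (-s)) (-s))
    (hf0 : ∀ s : ℝ, s ≤ 0 → f s = f 0) :
    ∀ t : ℝ, t ≤ 0 → χ t = ∫ s in Set.Ici (0 : ℝ), max t (-s) ∂f.measure := by
  have hd0 : DifferentiableWithinAt ℝ χ (Iio (0 : ℝ)) 0 := by
    by_contra h
    rw [derivWithin_zero_of_not_differentiableWithinAt h] at h1
    norm_num at h1
  set D := fun x : ℝ => derivWithin χ (Iio x) x with hDdef
  set F := fun x : ℝ => derivWithin χ (Ioi x) x with hFdef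
  have hD : ∀ x : ℝ, x ≤ 0 → HasDerivWithinAt χ (D x) (Iio x) x := by
    intro x hx
    rcases eq_or_lt_of_le hx with rfl | hx'
    · exact hd0.hasDerivWithinAt
    · exact leftDeriv_exists hconv hx'
  have hF : ∀ x : ℝ, x < 0 → HasDerivWithinAt χ (F x) (Ioi x) x :=
    fun x hx => rightDeriv_exists hconv hx
  have hD0 : D 0 = 1 := h1
  have slope_le_D : ∀ w x : ℝ, w < x → x ≤ 0 → slope χ w x ≤ D x := fun w x hwx hx =>
    hconv.slope_le_of_hasDerivWithinAt_Iio (le_of_lt (hwx.trans_le hx)) hx hwx (hD x hx)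
  have F_le_slope : ∀ x y : ℝ, x < y → y ≤ 0 → F x ≤ slope χ x y := fun x y hxy hy =>
    hconv.le_slope_of_hasDerivWithinAt_Ioi (le_of_lt (hxy.trans_le hy)) hy hxy
      (hF x (hxy.trans_le hy))
  have D_le_slope : ∀ x y : ℝ, x < y → y ≤ 0 → D x ≤ slope χ x y := by
    intro x y hxy hy
    have hx : x ≤ 0 := le_of_lt (hxy.trans_le hy)
    have htend := (hasDerivWithinAt_iff_tendsto_slope' (notMem_Iio.2 le_rfl)).1 (hD x hx)
    refine le_of_tendsto htend ?_
    filter_upwards [self_mem_nhdsWithin] with w hw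
    exact (hconv.slope_mono hx) ⟨le_of_lt ((mem_Iio.1 hw).trans_le hx), ne_of_lt hw⟩
      ⟨hy, hxy.ne'⟩ ((mem_Iio.1 hw).le.trans hxy.le)
  have D_nonneg : ∀ x : ℝ, x ≤ 0 → 0 ≤ D x := by
    intro x hx
    have htend := (hasDerivWithinAt_iff_tendsto_slope' (notMem_Iio.2 le_rfl)).1 (hD x hx)
    refine ge_of_tendsto htend ?_
    filter_upwards [self_mem_nhdsWithin] with w hw
    rw [slope_def_field]
    refine div_nonneg_iff.2 (Or.inr ⟨?_, ?_⟩)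
    · exact sub_nonpos.2 (hmono ((mem_Iio.1 hw).le.trans hx) hx (mem_Iio.1 hw).le)
    · linarith [mem_Iio.1 hw]
  have D_le_F : ∀ x : ℝ, x < 0 → D x ≤ F x := by
    intro x hx
    have htend := (hasDerivWithinAt_iff_tendsto_slope' (notMem_Ioi.2 le_rfl)).1 (hF x hx)
    refine ge_of_tendsto htend ?_
    filter_upwards [Ioo_mem_nhdsGT hx] with y hy
    exact D_le_slope x y hy.1 hy.2.le
  have F_le_D : ∀ x y : ℝ, x < y → y ≤ 0 → F x ≤ D y := fun x y hxy hy =>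
    (F_le_slope x y hxy hy).trans (slope_le_D x y hxy hy)
  -- Tendsto f atTop (𝓝 0)
  have hψmono : Monotone (fun x : ℝ => χ (min x 0)) := fun a b hab =>
    hmono (min_le_right a 0) (min_le_right b 0) (min_le_min hab le_rfl)
  have hψbdd : BddBelow (range fun x : ℝ => χ (min x 0)) := by
    obtain ⟨c, hc⟩ := hbddB
    exact ⟨c, by rintro _ ⟨x, rfl⟩; exact hc ⟨min x 0, min_le_right x 0, rfl⟩⟩
  have hψtend := tendsto_atBot_ciInf hψmono hψbdd
  have hDtop : Tendsto (fun s : ℝ => D (-s)) atTop (𝓝 0) := by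
    have h1' : Tendsto (fun s : ℝ => χ (min (-s + 1) 0) - χ (min (-s) 0)) atTop (𝓝 0) := by
      have ha : Tendsto (fun s : ℝ => -s + 1) atTop atBot :=
        (tendsto_neg_atTop_atBot).atBot_add tendsto_const_nhds
      have hb : Tendsto (fun s : ℝ => -s) atTop atBot := tendsto_neg_atTop_atBot
      have := (hψtend.comp ha).sub (hψtend.comp hb)
      simpa using this
    apply squeeze_zero' ?_ ?_ h1'
    · filter_upwards [eventually_ge_atTop (0 : ℝ)] with s hs
      exact D_nonneg (-s) (by linarith)
    · filter_upwards [eventually_ge_atTop (1 : ℝ)] with s hs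
      have h2 : D (-s) ≤ slope χ (-s) (-s + 1) :=
        D_le_slope (-s) (-s + 1) (by linarith) (by linarith)
      rw [slope_def_field] at h2
      have hmin1 : min (-s + 1) (0 : ℝ) = -s + 1 := min_eq_left (by linarith)
      have hmin2 : min (-s) (0 : ℝ) = -s := min_eq_left (by linarith)
      rw [hmin1, hmin2]
      have : (-s + 1) - (-s) = (1 : ℝ) := by ring
      rw [this, div_one] at h2
      linarith
  have hftop : Tendsto (⇑f) atTop (𝓝 0) := by
    have h2 : Tendsto (fun s : ℝ => -D (-s)) atTop (𝓝 (-0)) := hDtop.neg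
    rw [neg_zero] at h2
    apply h2.congr'
    filter_upwards [eventually_ge_atTop (0 : ℝ)] with s hs
    exact (hf s hs).symm
  have hfbot : Tendsto (⇑f) atBot (𝓝 (f 0)) := by
    apply Tendsto.congr' _ tendsto_const_nhds
    filter_upwards [eventually_le_atBot (0 : ℝ)] with s hs
    exact (hf0 s hs).symm
  have hf0val : f 0 = -1 := by
    have h := hf 0 le_rfl
    rw [neg_zero] at h
    rw [h, h1]
  have hleftLim0 : ∀ x : ℝ, x ≤ 0 → Function.leftLim (⇑f) x = f 0 := by
    intro x hx
    apply le_antisymm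
    · calc Function.leftLim (⇑f) x ≤ f x := f.mono.leftLim_le le_rfl
        _ = f 0 := hf0 x hx
    · calc f 0 = f (x - 1) := (hf0 _ (by linarith)).symm
        _ ≤ Function.leftLim (⇑f) x := f.mono.le_leftLim (by linarith)
  have hf0_le_leftLim : ∀ x : ℝ, f 0 ≤ Function.leftLim (⇑f) x := by
    intro x
    rcases le_or_gt x 0 with hx | hx
    · exact (hleftLim0 x hx).ge
    · exact f.mono.le_leftLim hx
  have hIci : f.measure (Ici (0 : ℝ)) = 1 := by
    rw [f.measure_Ici hftop, hleftLim0 0 le_rfl, hf0val]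
    norm_num
  set μ' : Measure ℝ := f.measure.restrict (Ici 0) with hμ'def
  haveI : IsFiniteMeasure μ' := by
    constructor
    rw [hμ'def, Measure.restrict_apply_univ, hIci]
    exact ENNReal.one_lt_top
  intro t ht
  rcases eq_or_lt_of_le ht with rfl | ht'
  · rw [h0]
    symm
    apply setIntegral_eq_zero_of_forall_eq_zero
    intro s hs
    exact max_eq_left (by linarith [mem_Ici.1 hs] : -s ≤ (0 : ℝ))
  -- now t < 0
  have hcont : ContinuousOn χ (Icc t 0) := by
    intro x hx
    have hx0 : x ≤ 0 := hx.2
    have hL : ContinuousWithinAt χ (Iio x) x := (hD x hx0).continuousWithinAt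
    rcases lt_or_eq_of_le hx0 with hx' | rfl
    · have hR : ContinuousWithinAt χ (Ioi x) x := (hF x hx').continuousWithinAt
      have hU : ContinuousWithinAt χ (insert x (Iio x ∪ Ioi x)) x :=
        continuousWithinAt_insert_self.2 (hL.union hR)
      refine hU.mono ?_
      intro y _
      rcases eq_or_ne y x with rfl | hne
      · exact mem_insert _ _
      · exact mem_insert_of_mem _ (hne.lt_or_gt.imp mem_Iio.2 mem_Ioi.2)
    · have hU : ContinuousWithinAt χ (insert (0:ℝ) (Iio (0:ℝ))) 0 :=
        continuousWithinAt_insert_self.2 hL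
      refine hU.mono ?_
      intro y hy
      rcases eq_or_lt_of_le hy.2 with hy0 | hylt
      · rw [hy0]; exact mem_insert _ _
      · exact mem_insert_of_mem _ (mem_Iio.2 hylt)
  set G := fun x : ℝ => if x < 0 then F x else (1 : ℝ) with hGdef
  have hGmono : MonotoneOn G (Icc t 0) := by
    intro x hx y hy hxy
    by_cases hy0 : y < 0
    · have hx0 : x < 0 := lt_of_le_of_lt hxy hy0
      simp only [hGdef, if_pos hx0, if_pos hy0]
      rcases eq_or_lt_of_le hxy with rfl | h
      · exact le_rfl
      · exact (F_le_D x y h hy0.le).trans (D_le_F y hy0)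
    · have hy0' : y = 0 := le_antisymm hy.2 (not_lt.1 hy0)
      subst hy0'
      simp only [hGdef, if_neg (lt_irrefl (0 : ℝ))]
      by_cases hx0 : x < 0
      · rw [if_pos hx0]
        exact (F_le_D x 0 hx0 le_rfl).trans (le_of_eq hD0)
      · rw [if_neg hx0]
  have hFTC : ∫ y in t..0, G y = -χ t := by
    rw [intervalIntegral.integral_eq_sub_of_hasDeriv_right_of_le ht hcont ?_ ?_, h0, zero_sub]
    · intro x hx
      have hGx : G x = F x := if_pos hx.2
      rw [hGx]
      exact hF x hx.2
    · apply MonotoneOn.intervalIntegrable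
      rwa [uIcc_of_le ht]
  have hDint : ∫ y in t..0, D y = -χ t := by
    rw [← hFTC]
    apply intervalIntegral.integral_congr_ae
    have hS : ({x : ℝ | x < 0 ∧ D x ≠ F x}).Countable := by
      apply Set.PairwiseDisjoint.countable_of_isOpen (s := fun x => Ioo (D x) (F x))
      · intro x hx y hy hxy
        rcases hxy.lt_or_gt with h | h
        · apply Set.disjoint_left.2
          rintro z ⟨_, hz2⟩ ⟨hz3, _⟩
          exact absurd (hz2.trans_le (F_le_D x y h hy.1.le)) (not_lt.2 hz3.le)
        · apply Set.disjoint_left.2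
          rintro z ⟨hz1, _⟩ ⟨_, hz4⟩
          exact absurd (hz4.trans_le (F_le_D y x h hx.1.le)) (not_lt.2 hz1.le)
      · intro x _
        exact isOpen_Ioo
      · intro x hx
        exact nonempty_Ioo.2 (lt_of_le_of_ne (D_le_F x hx.1) hx.2)
    filter_upwards [hS.ae_notMem volume] with x hx hmem
    rw [Set.uIoc_of_le ht] at hmem
    rcases lt_or_eq_of_le hmem.2 with hx0 | rfl
    · have hDF : D x = F x := by
        by_contra hne
        exact hx ⟨hx0, hne⟩
      rw [hDF, hGdef]
      simp only [if_pos hx0]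
    · rw [hGdef]
      simp only [lt_irrefl, if_false]
      exact hD0
  -- the integrand
  set g : ℝ → ℝ := fun s => max 0 (-s - t) with hgdef
  have hgcont : Continuous g := by
    apply Continuous.max continuous_const
    continuity
  have hgint : Integrable g μ' := by
    apply Integrable.mono' (integrable_const (-t)) hgcont.aestronglyMeasurable
    filter_upwards [ae_restrict_mem measurableSet_Ici] with s hs
    rw [Real.norm_eq_abs, abs_of_nonneg (le_max_left _ _)]
    exact max_le (by linarith) (by linarith [mem_Ici.1 hs])
  have key : ∫ s in Ici (0 : ℝ), max t (-s) ∂f.measure = t + ∫ s, g s ∂μ' := by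
    have heq : ∀ s : ℝ, max t (-s) = t + g s := by
      intro s
      rcases le_total (-s - t) 0 with h | h
      · rw [hgdef]
        simp only [max_eq_left h, add_zero]
        exact max_eq_left (by linarith)
      · rw [hgdef]
        simp only [max_eq_right h]
        rw [max_eq_right (by linarith : t ≤ -s)]
        ring
    calc ∫ s in Ici (0 : ℝ), max t (-s) ∂f.measure = ∫ s, (t + g s) ∂μ' := by
          rw [← hμ'def]
          exact integral_congr_ae (Eventually.of_forall fun s => heq s)
      _ = t + ∫ s, g s ∂μ' := by
          rw [integral_add (integrable_const t) hgint, integral_const]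
          rw [hμ'def, measureReal_def, Measure.restrict_apply_univ, hIci]
          simp
  have hlayer : ∫ s, g s ∂μ' = ∫ u in Ioi (0 : ℝ), ENNReal.toReal (μ' {a | u < g a}) :=
    hgint.integral_eq_integral_meas_lt (Eventually.of_forall fun s => le_max_left _ _)
  have hmeas_eq : ∀ u : ℝ, 0 < u →
      ENNReal.toReal (μ' {a | u < g a}) = Function.leftLim (⇑f) (-t - u) - f 0 := by
    intro u hu
    have hset : {a : ℝ | u < g a} = Iio (-t - u) := by
      ext a
      simp only [mem_setOf_eq, mem_Iio, hgdef, lt_max_iff]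
      constructor
      · rintro (h | h)
        · linarith
        · linarith
      · intro h
        right
        linarith
    rw [hset, hμ'def, Measure.restrict_apply measurableSet_Iio, inter_comm, Set.Ici_inter_Iio,
      f.measure_Ico, hleftLim0 0 le_rfl,
      ENNReal.toReal_ofReal (by linarith [hf0_le_leftLim (-t - u)])]
  have hanti : Antitone (fun u : ℝ => ENNReal.toReal (μ' {a | u < g a})) := by
    intro u v huv
    exact ENNReal.toReal_mono (measure_ne_top μ' _)
      (measure_mono fun a ha => lt_of_le_of_lt huv ha)
  have hsplit : ∫ u in Ioi (0 : ℝ), ENNReal.toReal (μ' {a | u < g a}) =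
      ∫ u in Ioc (0 : ℝ) (-t), (Function.leftLim (⇑f) (-t - u) - f 0) := by
    have hzero : ∀ u ∈ Ioi (-t), ENNReal.toReal (μ' {a | u < g a}) = 0 := by
      intro u hu
      rw [hmeas_eq u (by linarith [mem_Ioi.1 hu]), hleftLim0 (-t - u) (by linarith [mem_Ioi.1 hu])]
      ring
    have hint1 : IntegrableOn (fun u : ℝ => ENNReal.toReal (μ' {a | u < g a}))
        (Ioc (0 : ℝ) (-t)) volume := by
      have h' := (hanti.antitoneOn (uIcc (0 : ℝ) (-t))).intervalIntegrable (μ := volume)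
      exact (intervalIntegrable_iff_integrableOn_Ioc_of_le (by linarith : (0:ℝ) ≤ -t)).1 h'
    have hint2 : IntegrableOn (fun u : ℝ => ENNReal.toReal (μ' {a | u < g a}))
        (Ioi (-t)) volume := by
      rw [integrableOn_congr_fun hzero measurableSet_Ioi]
      exact integrableOn_zero
    rw [← Ioc_union_Ioi_eq_Ioi (by linarith : (0 : ℝ) ≤ -t),
      setIntegral_union (Ioc_disjoint_Ioi le_rfl) measurableSet_Ioi hint1 hint2,
      setIntegral_eq_zero_of_forall_eq_zero hzero, add_zero]
    exact setIntegral_congr_fun measurableSet_Ioc fun u hu => hmeas_eq u hu.1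
  have hIoc : ∫ u in Ioc (0 : ℝ) (-t), (Function.leftLim (⇑f) (-t - u) - f 0) = χ t - t := by
    rw [← intervalIntegral.integral_of_le (by linarith : (0 : ℝ) ≤ -t)]
    have hC : ({x : ℝ | ¬ContinuousAt (⇑f) x}).Countable := f.mono.countable_not_continuousAt
    have hN : ({u : ℝ | Function.leftLim (⇑f) (-t - u) ≠ f (-t - u)}).Countable := by
      apply Set.Countable.mono ?_ (hC.image fun x => -t - x)
      intro u hu
      refine ⟨-t - u, ?_, by ring⟩
      simp only [mem_setOf_eq]
      intro hcont'
      exact hu (leftLim_eq_of_tendsto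
        (hcont'.continuousWithinAt.tendsto))
    have heq : ∫ u in (0 : ℝ)..(-t), (Function.leftLim (⇑f) (-t - u) - f 0) =
        ∫ u in (0 : ℝ)..(-t), (f (-t - u) - f 0) := by
      apply intervalIntegral.integral_congr_ae
      filter_upwards [hN.ae_notMem volume] with u hu _
      rw [of_not_not (fun h => hu h)]
    rw [heq]
    have hi1 : IntervalIntegrable (fun u : ℝ => f (-t - u)) volume 0 (-t) := by
      apply AntitoneOn.intervalIntegrable
      intro a _ b _ hab
      exact f.mono (by linarith)
    rw [intervalIntegral.integral_sub hi1 intervalIntegrable_const,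
      intervalIntegral.integral_const, intervalIntegral.integral_comp_sub_left (fun v => f v) (-t)]
    have hb1 : -t - -t = (0 : ℝ) := by ring
    have hb2 : -t - 0 = -t := by ring
    rw [hb1, hb2]
    have hval : ∫ v in (0 : ℝ)..(-t), f v = χ t := by
      have hcongr : ∫ v in (0 : ℝ)..(-t), f v = ∫ v in (0 : ℝ)..(-t), -D (-v) := by
        apply intervalIntegral.integral_congr
        intro v hv
        rw [uIcc_of_le (by linarith : (0 : ℝ) ≤ -t)] at hv
        exact hf v hv.1
      rw [hcongr, intervalIntegral.integral_neg]
      have hcomp : ∫ v in (0 : ℝ)..(-t), D (-v) = ∫ w in (-(-t))..(-(0:ℝ)), D w :=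
        intervalIntegral.integral_comp_neg fun w => D w
      rw [hcomp, neg_neg, neg_zero, hDint]
      ring
    rw [hval, hf0val, smul_eq_mul]
    ring
  rw [key, hlayer, hsplit, hIoc]
  ring
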